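/- In the setting of the previous DP, suppose the per-stage cost c(t,b) → c*(b) and the survival probability P(r_t > b) → P(r > b) as t → ∞ for each action b, with P(r > b) < 1 for all b in the finite action set. Then lim_{t→∞} V*(t) = min_b v(b) where v(b) = c*(b)/(1 − P(r > b)). -/

import Mathlib

open Filter

theorem stmt_14 (B : Finset ℕ) (hB : B.Nonempty) (hBpos : ∀ b ∈ B, 0 < b)
    (c : ℕ → ℕ → ℝ) (p : ℕ → ℕ → ℝ)
    (hc0 : ∀ t b, 0 ≤ c t b) (hcbdd : ∃ Cb : ℝ, ∀ t b, c t b ≤ Cb)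
    (hp : ∀ t b, p t b ∈ Set.Icc (0 : ℝ) 1)
    (L : (ℕ → ℝ) → (ℕ → ℝ))
    (hL : ∀ V t, L V t = B.inf' hB (fun b => c t b + p t b * V (t + b)))
    (Vstar : ℕ → ℝ)
    -- V* is the optimal value: the smallest nonnegative fixed point of the Bellman operator
    (hfix : L Vstar = Vstar) (hnn : ∀ t, 0 ≤ Vstar t)
    (hsmall : ∀ W : ℕ → ℝ, (∀ t, 0 ≤ W t) → L W = W → ∀ t, Vstar t ≤ W t)
    (cstar P : ℕ → ℝ)
    (hclim : ∀ b ∈ B, Tendsto (fun t => c t b) atTop (nhds (cstar b)))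
    (hplim : ∀ b ∈ B, Tendsto (fun t => p t b) atTop (nhds (P b)))
    (hPlt : ∀ b ∈ B, P b < 1) :
    Tendsto Vstar atTop (nhds (B.inf' hB fun b => cstar b / (1 - P b))) := by
  classical
  obtain ⟨Cb, hCb⟩ := hcbdd
  have hCb0 : 0 ≤ Cb := le_trans (hc0 0 0) (hCb 0 0)
  have hP0 : ∀ b ∈ B, 0 ≤ P b := fun b hb =>
    ge_of_tendsto' (hplim b hb) fun t => (hp t b).1
  have hP1' : ∀ b ∈ B, P b ≤ 1 := fun b hb =>
    le_of_tendsto' (hplim b hb) fun t => (hp t b).2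
  have hcs0 : ∀ b ∈ B, 0 ≤ cstar b := fun b hb =>
    ge_of_tendsto' (hclim b hb) fun t => hc0 t b
  have hP1 : ∀ b ∈ B, 0 < 1 - P b := fun b hb => by linarith [hPlt b hb]
  set v : ℕ → ℝ := fun b => cstar b / (1 - P b) with hv
  set vs : ℝ := B.inf' hB v with hvs
  have hvnn : ∀ b ∈ B, 0 ≤ v b := fun b hb => div_nonneg (hcs0 b hb) (hP1 b hb).le
  have hvs0 : 0 ≤ vs := Finset.le_inf' hB _ hvnn
  -- monotonicity of L
  have keymono : ∀ V W : ℕ → ℝ, (∀ s, V s ≤ W s) → ∀ t, L V t ≤ L W t := by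
    intro V W h t
    rw [hL, hL]
    refine Finset.le_inf' hB _ fun b hb => ?_
    refine le_trans (Finset.inf'_le _ hb) ?_
    have h1 := (hp t b).1
    have h2 := h (t + b)
    nlinarith
  -- L preserves nonnegativity
  have keypos : ∀ V : ℕ → ℝ, (∀ s, 0 ≤ V s) → ∀ t, 0 ≤ L V t := by
    intro V h t
    rw [hL]
    refine Finset.le_inf' hB _ fun b hb => ?_
    have := mul_nonneg (hp t b).1 (h (t + b))
    linarith [hc0 t b]
  -- supersolution lemma: Vstar is below any nonnegative supersolution
  have hsuper : ∀ W : ℕ → ℝ, (∀ s, 0 ≤ W s) → (∀ t, L W t ≤ W t) → ∀ t, Vstar t ≤ W t := by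
    intro W hW0 hWs
    set seq : ℕ → ℕ → ℝ := fun n => L^[n] W with hseq
    have hsucc : ∀ n, seq (n + 1) = L (seq n) := fun n => Function.iterate_succ_apply' L n W
    have hnn' : ∀ n s, 0 ≤ seq n s := by
      intro n
      induction n with
      | zero => exact hW0
      | succ k ih => intro s; rw [hsucc]; exact keypos _ ih s
    have hanti : ∀ n t, seq (n + 1) t ≤ seq n t := by
      intro n
      induction n with
      | zero => intro t; rw [hsucc]; exact hWs t
      | succ k ih =>
        intro t
        have h := keymono _ _ ih t
        rw [← hsucc k] at h
        rw [hsucc (k + 1)]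
        exact h
    have hanti' : ∀ t, Antitone fun n => seq n t := fun t =>
      antitone_nat_of_succ_le fun n => hanti n t
    set Winf : ℕ → ℝ := fun t => ⨅ n, seq n t with hWinfdef
    have hbdd : ∀ t, BddBelow (Set.range fun n => seq n t) := by
      intro t
      refine ⟨0, ?_⟩
      rintro x ⟨n, rfl⟩
      exact hnn' n t
    have htend : ∀ t, Tendsto (fun n => seq n t) atTop (nhds (Winf t)) :=
      fun t => tendsto_atTop_ciInf (hanti' t) (hbdd t)
    have hWinf0 : ∀ t, 0 ≤ Winf t := fun t => le_ciInf fun n => hnn' n t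
    have hWinfle : ∀ t, Winf t ≤ W t := fun t => ciInf_le (hbdd t) 0
    have hfixWinf : L Winf = Winf := by
      funext t
      have h1 : Tendsto (fun n => L (seq n) t) atTop (nhds (L Winf t)) := by
        simp only [hL]
        exact Filter.Tendsto.finset_inf'_nhds_apply hB fun b _ =>
          tendsto_const_nhds.add (tendsto_const_nhds.mul (htend (t + b)))
      have h2 : Tendsto (fun n => L (seq n) t) atTop (nhds (Winf t)) := by
        have heq : (fun n => L (seq n) t) = fun n => seq (n + 1) t := by
          funext n; rw [hsucc]
        rw [heq]
        exact (htend t).comp (tendsto_add_atTop_nat 1)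
      exact tendsto_nhds_unique h1 h2
    intro t
    exact le_trans (hsmall Winf hWinf0 hfixWinf t) (hWinfle t)
  -- Upper bound
  have hupper : ∀ ε : ℝ, 0 < ε → ∀ᶠ t in atTop, Vstar t ≤ vs + ε := by
    intro ε hε
    obtain ⟨b0, hb0, hvb0⟩ := B.exists_mem_eq_inf' hB v
    have hvb0' : cstar b0 = (1 - P b0) * vs := by
      have h1 : vs = cstar b0 / (1 - P b0) := hvb0
      field_simp [(hP1 b0 hb0).ne'] at h1
      linarith
    have hden : 0 < 1 + vs + ε := by linarith
    set δ : ℝ := (1 - P b0) * ε / (1 + vs + ε) with hδdef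
    have hδ0 : 0 < δ := div_pos (mul_pos (hP1 b0 hb0) hε) hden
    have hδeq : δ * (1 + vs + ε) = (1 - P b0) * ε := by
      rw [hδdef]; field_simp
    have hkey : cstar b0 + δ ≤ (1 - P b0 - δ) * (vs + ε) := by nlinarith
    have h1 := (hclim b0 hb0).eventually_lt_const (show cstar b0 < cstar b0 + δ by linarith)
    have h2 := (hplim b0 hb0).eventually_lt_const (show P b0 < P b0 + δ by linarith)
    obtain ⟨T, hT⟩ := eventually_atTop.mp (h1.and h2)
    set W : ℕ → ℝ := fun t => vs + ε + ((T - t : ℕ) : ℝ) * Cb with hWdef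
    have hW0 : ∀ s, 0 ≤ W s := by
      intro s
      have : (0 : ℝ) ≤ ((T - s : ℕ) : ℝ) * Cb := mul_nonneg (Nat.cast_nonneg _) hCb0
      simp only [hWdef]; linarith
    have hWs : ∀ t, L W t ≤ W t := by
      intro t
      rw [hL]
      refine le_trans (Finset.inf'_le _ hb0) ?_
      by_cases hge : T ≤ t
      · have hTt : T - t = 0 := Nat.sub_eq_zero_of_le hge
        have hTtb : T - (t + b0) = 0 := Nat.sub_eq_zero_of_le (le_trans hge (Nat.le_add_right _ _))
        obtain ⟨hc1, hp1⟩ := hT t hge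
        have hvse : 0 ≤ vs + ε := by linarith
        have hmul : p t b0 * (vs + ε) ≤ (P b0 + δ) * (vs + ε) :=
          mul_le_mul_of_nonneg_right hp1.le hvse
        simp only [hWdef, hTt, hTtb, Nat.cast_zero, zero_mul, add_zero]
        nlinarith
      · push_neg at hge
        have hb0pos := hBpos b0 hb0
        have hcast : ((T - t : ℕ) : ℝ) = ((T - t - 1 : ℕ) : ℝ) + 1 := by
          have h : T - t = (T - t - 1) + 1 := by omega
          rw [h]; push_cast; ring
        have hle2 : ((T - (t + b0) : ℕ) : ℝ) ≤ ((T - t - 1 : ℕ) : ℝ) :=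
          Nat.cast_le.mpr (by omega)
        have hWb : W (t + b0) ≤ vs + ε + ((T - t - 1 : ℕ) : ℝ) * Cb := by
          simp only [hWdef]
          have := mul_le_mul_of_nonneg_right hle2 hCb0
          linarith
        have hpW : p t b0 * W (t + b0) ≤ W (t + b0) := by
          have := hW0 (t + b0)
          nlinarith [(hp t b0).2]
        have hcb : c t b0 ≤ Cb := hCb t b0
        calc c t b0 + p t b0 * W (t + b0) ≤ Cb + (vs + ε + ((T - t - 1 : ℕ) : ℝ) * Cb) := by
              linarith [le_trans hpW hWb]
          _ = W t := by simp only [hWdef, hcast]; ring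
    filter_upwards [eventually_ge_atTop T] with t ht
    have h := hsuper W hW0 hWs t
    have hTt : T - t = 0 := Nat.sub_eq_zero_of_le ht
    simp only [hWdef, hTt, Nat.cast_zero, zero_mul, add_zero] at h
    exact h
  -- boundedness facts
  have hbd_le : IsBoundedUnder (· ≤ ·) atTop Vstar :=
    isBoundedUnder_of_eventually_le (hupper 1 one_pos)
  have hbd_ge : IsBoundedUnder (· ≥ ·) atTop Vstar :=
    isBoundedUnder_of_eventually_ge (Eventually.of_forall hnn)
  have hcob_ge : IsCoboundedUnder (· ≥ ·) atTop Vstar := hbd_le.isCoboundedUnder_ge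
  have hcob_le : IsCoboundedUnder (· ≤ ·) atTop Vstar := hbd_ge.isCoboundedUnder_le
  set m : ℝ := liminf Vstar atTop with hm
  have hm0 : 0 ≤ m := le_liminf_of_le hcob_ge (Eventually.of_forall hnn)
  set A : ℝ := B.inf' hB (fun b => cstar b + P b * m) with hA
  -- key liminf inequality
  have hstep : ∀ δ : ℝ, 0 < δ → δ ≤ 1 → A - δ * (m + 3) ≤ m := by
    intro δ hδ hδ1
    have hev : ∀ᶠ t in atTop, ∀ b ∈ B,
        |c t b - cstar b| < δ ∧ |p t b - P b| < δ ∧ m - δ < Vstar (t + b) := by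
      rw [eventually_all_finset]
      intro b hb
      have hc' : ∀ᶠ t in atTop, |c t b - cstar b| < δ := by
        have := Metric.tendsto_nhds.mp (hclim b hb) δ hδ
        filter_upwards [this] with t h
        rwa [Real.dist_eq] at h
      have hp' : ∀ᶠ t in atTop, |p t b - P b| < δ := by
        have := Metric.tendsto_nhds.mp (hplim b hb) δ hδ
        filter_upwards [this] with t h
        rwa [Real.dist_eq] at h
      have hV : ∀ᶠ s in atTop, m - δ < Vstar s :=
        eventually_lt_of_lt_liminf (by rw [← hm]; linarith) hbd_ge
      have hV' : ∀ᶠ t in atTop, m - δ < Vstar (t + b) :=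
        (tendsto_add_atTop_nat b).eventually hV
      filter_upwards [hc', hp', hV'] with t h1 h2 h3
      exact ⟨h1, h2, h3⟩
    refine le_liminf_of_le hcob_ge ?_
    filter_upwards [hev] with t ht
    have hfixt : L Vstar t = Vstar t := congrFun hfix t
    rw [← hfixt, hL]
    refine Finset.le_inf' hB _ fun b hb => ?_
    have hAle : A ≤ cstar b + P b * m := Finset.inf'_le _ hb
    obtain ⟨h1, h2, h3⟩ := ht b hb
    obtain ⟨h1a, h1b⟩ := abs_lt.mp h1
    obtain ⟨h2a, h2b⟩ := abs_lt.mp h2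
    have hpc := hp t b
    have hmul : p t b * (m - δ) ≤ p t b * Vstar (t + b) :=
      mul_le_mul_of_nonneg_left h3.le hpc.1
    have hprod : P b * (m - δ) - δ * (m + 1) ≤ p t b * (m - δ) := by
      rcases le_or_gt 0 (m - δ) with hmd | hmd
      · nlinarith
      · nlinarith [hP0 b hb, hpc.1, hpc.2, hP1' b hb]
    have hPb1 := hP1' b hb
    nlinarith [hP0 b hb]
  have hAm : A ≤ m := by
    by_contra hcon
    push_neg at hcon
    have hm3 : (0 : ℝ) < m + 3 := by linarith
    set δ : ℝ := min 1 ((A - m) / (2 * (m + 3))) with hδdef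
    have hδ0 : 0 < δ := lt_min one_pos (div_pos (by linarith) (by linarith))
    have hδ1 : δ ≤ 1 := min_le_left _ _
    have h := hstep δ hδ0 hδ1
    have hle : δ * (m + 3) ≤ (A - m) / 2 := by
      have h1 : δ ≤ (A - m) / (2 * (m + 3)) := min_le_right _ _
      have h2 := mul_le_mul_of_nonneg_right h1 hm3.le
      calc δ * (m + 3) ≤ (A - m) / (2 * (m + 3)) * (m + 3) := h2
        _ = (A - m) / 2 := by field_simp
    linarith
  obtain ⟨b1, hb1, hAb1⟩ := B.exists_mem_eq_inf' hB (fun b => cstar b + P b * m)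
  have hcp : cstar b1 + P b1 * m ≤ m := by rw [← hAb1]; exact hAm
  have hVb1 : v b1 ≤ m := by
    rw [hv]
    rw [div_le_iff₀ (hP1 b1 hb1)]
    nlinarith
  have hlower : vs ≤ m := le_trans (Finset.inf'_le _ hb1) hVb1
  have hup : limsup Vstar atTop ≤ vs := by
    by_contra hcon
    push_neg at hcon
    have h := limsup_le_of_le hcob_le (hupper ((limsup Vstar atTop - vs) / 2) (by linarith))
    linarith
  exact tendsto_of_le_liminf_of_limsup_le hlower hup hbd_le hbd_ge
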